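/- Let a, b, f : ℤ² → ℝ and let ψ, θ : ℤ² → ℝ both be solutions of the self-adjoint 5-point scheme with coefficients a, b, f. Then there exists a function α : ℤ² → ℝ such that for all (m,n) ∈ ℤ²: Δ_n α(m,n) = a(m−1,n)·(θ(m,n)ψ(m−1,n) − θ(m−1,n)ψ(m,n)) and Δ_m α(m,n) = −b(m,n−1)·(θ(m,n)ψ(m,n−1) − θ(m,n−1)ψ(m,n)). -/

import Mathlib

noncomputable def intSum (g : ℤ → ℝ) (k : ℤ) : ℝ :=
  ∑ i ∈ Finset.range k.toNat, g i - ∑ i ∈ Finset.range (-k).toNat, g (-(i:ℤ)-1)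

lemma intSum_succ (g : ℤ → ℝ) (k : ℤ) : intSum g (k+1) - intSum g k = g k := by
  rcases le_or_gt 0 k with h | h
  · have h1 : (k+1).toNat = k.toNat + 1 := by omega
    have h2 : (-k).toNat = 0 := by omega
    have h3 : (-(k+1)).toNat = 0 := by omega
    have h4 : ((k.toNat : ℤ)) = k := by omega
    have h5 : (-1 + -k).toNat = 0 := by omega
    simp [intSum, h1, h2, h3, h5, Finset.sum_range_succ, h4]
  · have h1 : (k+1).toNat = 0 := by omega
    have h2 : k.toNat = 0 := by omega
    have h3 : (-k).toNat = (-(k+1)).toNat + 1 := by omega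
    have h4 : (-((((-(k+1)).toNat) : ℤ)) - 1) = k := by omega
    simp [intSum, h1, h2, h3, Finset.sum_range_succ, h4]
    congr 1; omega

lemma int_eq_of_diff (F G : ℤ → ℝ) (h0 : F 0 = G 0)
    (h : ∀ k : ℤ, F (k+1) - F k = G (k+1) - G k) : ∀ k, F k = G k := by
  intro k
  induction k using Int.induction_on with
  | zero => exact h0
  | succ n ih => have := h n; push_cast at this ⊢; linarith
  | pred n ih =>
      have := h (-(n:ℤ)-1); push_cast at this ⊢
      have e : (-(n:ℤ)-1) + 1 = -n := by ring
      rw [e] at this; linarith [this]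

/-- The self-adjoint 5-point scheme. -/
def Is5PointSolution (a b f ψ : ℤ → ℤ → ℝ) : Prop :=
  ∀ m n : ℤ,
    a m n * ψ (m + 1) n + a (m - 1) n * ψ (m - 1) n
      + b m n * ψ m (n + 1) + b m (n - 1) * ψ m (n - 1) = f m n * ψ m n

/-- Given two solutions `ψ, θ` of the self-adjoint 5-point scheme, there exists a
potential `α` with
`Δ_n α(m,n) = a(m−1,n)(θ(m,n)ψ(m−1,n) − θ(m−1,n)ψ(m,n))` and
`Δ_m α(m,n) = −b(m,n−1)(θ(m,n)ψ(m,n−1) − θ(m,n−1)ψ(m,n))`. -/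
theorem exists_potential_5point
    (a b f ψ θ : ℤ → ℤ → ℝ)
    (hψ : Is5PointSolution a b f ψ) (hθ : Is5PointSolution a b f θ) :
    ∃ α : ℤ → ℤ → ℝ, ∀ m n : ℤ,
      α m (n + 1) - α m n
        = a (m - 1) n * (θ m n * ψ (m - 1) n - θ (m - 1) n * ψ m n) ∧
      α (m + 1) n - α m n
        = -(b m (n - 1) * (θ m n * ψ m (n - 1) - θ m (n - 1) * ψ m n)) := by
  set P : ℤ → ℤ → ℝ := fun m n => a (m-1) n * (θ m n * ψ (m-1) n - θ (m-1) n * ψ m n) with hP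
  set Q : ℤ → ℤ → ℝ := fun m n => -(b m (n-1) * (θ m n * ψ m (n-1) - θ m (n-1) * ψ m n)) with hQ
  have closed : ∀ m n : ℤ, Q m (n+1) - Q m n = P (m+1) n - P m n := by
    intro m n
    have h1 := hψ m n
    have h2 := hθ m n
    simp only [hP, hQ, show m+1-1 = m from by ring, show n+1-1 = n from by ring]
    linear_combination θ m n * h1 - ψ m n * h2
  refine ⟨fun m n => intSum (fun i => Q i 0) m + intSum (fun j => P m j) n, fun m n => ?_⟩
  constructor
  · have := intSum_succ (fun j => P m j) n
    simp only [hP] at this ⊢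
    linarith
  · have key : ∀ k : ℤ, (intSum (fun i => Q i 0) (m+1) + intSum (fun j => P (m+1) j) k)
        - (intSum (fun i => Q i 0) m + intSum (fun j => P m j) k) = Q m k := by
      apply int_eq_of_diff
      · have := intSum_succ (fun i => Q i 0) m
        simp only [intSum, Int.toNat_zero, neg_zero, Finset.range_zero,
          Finset.sum_empty, sub_zero] at *
        linarith
      · intro k
        have e1 := intSum_succ (fun j => P (m+1) j) k
        have e2 := intSum_succ (fun j => P m j) k
        have e3 := closed m k
        linarith
    have := key n
    simp only [hQ] at this ⊢
    linarith
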